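/- Let G be a simple graph whose girth g is finite, let C be a cycle in G of length exactly g, and let w be any vertex on C. Then there exists an edge {v, x} of C such that g = dist(w,v) + dist(w,x) + 1, where dist denotes shortest-path distance in G. -/

import Mathlib

open SimpleGraph Walk

section Aux

variable {V : Type*} {G : SimpleGraph V}

/-- Initial segment of a walk: the first `n` edges. -/
def wtake : ∀ {u v : V} (p : G.Walk u v) (n : ℕ), G.Walk u (p.getVert n)
  | _, _, .nil, _ => .nil
  | _, _, .cons _ _, 0 => .nil
  | _, _, .cons h q, n + 1 => .cons h (wtake q n)

lemma length_wtake : ∀ {u v : V} (p : G.Walk u v) (n : ℕ), n ≤ p.length →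
    (wtake p n).length = n
  | _, _, .nil, n, hn => by
      simp only [Walk.length_nil, Nat.le_zero] at hn
      subst hn; rfl
  | _, _, .cons _ _, 0, _ => rfl
  | _, _, .cons h q, n + 1, hn => by
      show (Walk.cons h (wtake q n)).length = n + 1
      rw [Walk.length_cons, length_wtake q n (by simpa using hn)]

lemma support_wtake : ∀ {u v : V} (p : G.Walk u v) (n : ℕ),
    (wtake p n).support = p.support.take (n + 1)
  | _, _, .nil, n => by simp [wtake]
  | _, _, .cons _ _, 0 => by simp [wtake]; rfl
  | _, _, .cons h q, n + 1 => by
      show (Walk.cons h (wtake q n)).support = _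
      rw [Walk.support_cons, support_wtake q n, Walk.support_cons, List.take_succ_cons]

lemma length_wdrop : ∀ {u v : V} (p : G.Walk u v) (n : ℕ),
    (p.drop n).length = p.length - n
  | _, _, .nil, n => by cases n <;> simp [Walk.drop]
  | _, _, .cons h q, 0 => by simp [Walk.drop]
  | _, _, .cons h q, n + 1 => by
      rw [Walk.drop_cons_eq h q (n + 1) (by omega)]; show ((q.drop n).copy _ rfl).length = _
      rw [Walk.length_copy, length_wdrop q n, Walk.length_cons]
      omega

lemma support_wdrop : ∀ {u v : V} (p : G.Walk u v) (n : ℕ), n ≤ p.length →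
    (p.drop n).support = p.support.drop n
  | _, _, .nil, n, hn => by
      simp only [Walk.length_nil, Nat.le_zero] at hn
      subst hn; rfl
  | _, _, .cons h q, 0, _ => by simp [Walk.drop]
  | _, _, .cons h q, n + 1, hn => by
      rw [Walk.drop_cons_eq h q (n + 1) (by omega)]; show ((q.drop n).copy _ rfl).support = _
      rw [Walk.support_copy, support_wdrop q n (by simpa using hn), Walk.support_cons,
        List.drop_succ_cons]

lemma edge_getVert_mem : ∀ {u v : V} (p : G.Walk u v) {i : ℕ}, i < p.length →
    s(p.getVert i, p.getVert (i + 1)) ∈ p.edges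
  | _, _, .nil, i, hi => by simp at hi
  | _, _, .cons h q, 0, _ => by
      show s((Walk.cons h q).getVert 0, (Walk.cons h q).getVert 1) ∈ _
      rw [Walk.getVert_zero, Walk.getVert_cons_succ, Walk.getVert_zero, Walk.edges_cons]
      exact List.mem_cons_self
  | _, _, .cons h q, i + 1, hi => by
      rw [Walk.getVert_cons_succ, Walk.getVert_cons_succ, Walk.edges_cons]
      exact List.mem_cons_of_mem _ (edge_getVert_mem q (by simpa using hi))

/-- Two distinct paths between the same pair of vertices yield a cycle of length at most
the sum of their lengths. -/
lemma exists_cycle_of_two_paths {u v : V} (p : G.Walk u v) :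
    ∀ q : G.Walk u v, p.IsPath → q.IsPath → p ≠ q →
    ∃ (a : V) (C : G.Walk a a), C.IsCycle ∧ C.length ≤ p.length + q.length := by
  classical
  induction p with
  | nil =>
    intro q hp hq hne
    exact absurd (congrArg Subtype.val (SimpleGraph.Path.loop_eq ⟨q, hq⟩)).symm hne
  | @cons u b v h p' ih =>
    intro q hp hq hne
    cases q with
    | nil =>
      exact absurd (congrArg Subtype.val (SimpleGraph.Path.loop_eq ⟨_, hp⟩)) (by simp)
    | @cons _ x _ h' q' =>
      by_cases hb : b = x
      · subst hb
        have hne' : p' ≠ q' := by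
          intro hEq
          exact hne (by rw [hEq])
        obtain ⟨a, C, hC, hCl⟩ := ih q' hp.of_cons hq.of_cons hne'
        exact ⟨a, C, hC, by simp only [Walk.length_cons]; omega⟩
      · by_cases hmem : b ∈ (Walk.cons h' q').support
        · set q₁ := (Walk.cons h' q').takeUntil b hmem with hq₁
          have hq₁p : q₁.IsPath := hq.takeUntil hmem
          have he : s(u, b) ∉ q₁.reverse.edges := by
            rw [Walk.edges_reverse, List.mem_reverse]
            intro hme
            have h2 := Walk.edges_takeUntil_subset _ hmem hme
            rw [Walk.edges_cons] at h2
            rcases List.mem_cons.mp h2 with h3 | h3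
            · exact hb (Sym2.congr_right.mp h3)
            · have := Walk.fst_mem_support_of_mem_edges q' h3
              rw [Walk.cons_isPath_iff] at hq
              exact hq.2 this
          refine ⟨u, Walk.cons h q₁.reverse, ?_, ?_⟩
          · exact (Walk.cons_isCycle_iff _ _).mpr ⟨hq₁p.reverse, he⟩
          · have hle := Walk.length_takeUntil_le _ hmem
            rw [← hq₁] at hle
            simp only [Walk.length_cons, Walk.length_reverse] at *
            omega
        · have hq₂ : (Walk.cons h.symm (Walk.cons h' q')).IsPath := hq.cons hmem
          have hne' : p' ≠ Walk.cons h.symm (Walk.cons h' q') := by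
            intro hEq
            rw [hEq, Walk.cons_isPath_iff] at hp
            exact hp.2 (by simp)
          obtain ⟨a, C, hC, hCl⟩ := ih _ hp.of_cons hq₂ hne'
          exact ⟨a, C, hC, by simp only [Walk.length_cons] at *; omega⟩

end Aux

/-- Critical edge of a shortest cycle: if `c` is a cycle of length exactly the girth
`g` and `w` is a vertex on it (taken as its base point), then there is an edge `{v,x}`
of `c` with `g = dist w v + dist w x + 1`. -/
theorem shortest_cycle_critical_edge
    {V : Type*} (G : SimpleGraph V)
    (g : ℕ) (hg : G.egirth = (g : ℕ∞))
    {w : V} (c : G.Walk w w) (hc : c.IsCycle) (hlen : c.length = g) :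
    ∃ v x : V, s(v, x) ∈ c.edges ∧ g = G.dist w v + G.dist w x + 1 := by
  classical
  subst hlen
  have hg3 : 3 ≤ c.length := hc.three_le_length
  have girth_le : ∀ (a : V) (C : G.Walk a a), C.IsCycle → c.length ≤ C.length := by
    intro a C hC
    have h1 : (c.length : ℕ∞) ≤ G.egirth := le_of_eq hg.symm
    exact_mod_cast SimpleGraph.le_egirth.mp h1 a C hC
  -- the support tail facts
  have htail_nodup : c.support.tail.Nodup := hc.support_nodup
  have htail_len : c.support.tail.length = c.length := by
    have := c.length_support
    rw [List.length_tail, this]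
    omega
  have hlast : ∀ (hlt : c.length - 1 < c.support.tail.length),
      c.support.tail[c.length - 1] = w := by
    intro hlt
    have hne : c.support.tail ≠ [] := by
      intro h0
      rw [h0] at htail_len
      simp at htail_len
      omega
    have hsl : c.support.length = c.length + 1 := c.length_support
    have h2 : c.support[c.support.length - 1] = w := by
      rw [← List.getLast_eq_getElem]
      exact c.getLast_support
    rw [List.getElem_tail]
    convert h2 using 2
    omega
  have key : ∀ i : ℕ, 0 < i → i < c.length →
      G.dist w (c.getVert i) = min i (c.length - i) := by
    intro i hi0 hil
    set A := wtake c i with hA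
    have lenA : A.length = i := length_wtake c i hil.le
    have pathA : A.IsPath := by
      rw [Walk.isPath_def, hA, support_wtake, c.support_eq_cons, List.take_succ_cons,
        List.nodup_cons]
      refine ⟨?_, htail_nodup.sublist (List.take_sublist _ _)⟩
      intro hwmem
      obtain ⟨j, hj, hjw⟩ := List.getElem_of_mem hwmem
      have hj' : j < c.support.tail.length := by
        have := List.length_take_le i c.support.tail
        omega
      rw [List.getElem_take] at hjw
      have hji : j < i := by
        have := List.length_take (i := i) (l := c.support.tail)
        omega
      have heq : c.support.tail[j] = c.support.tail[c.length - 1] :=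
        hjw.trans (hlast (by omega)).symm
      have := (List.Nodup.getElem_inj_iff htail_nodup).mp heq
      omega
    have upper1 : G.dist w (c.getVert i) ≤ i := by
      have := SimpleGraph.dist_le A
      omega
    have upper2 : G.dist w (c.getVert i) ≤ c.length - i := by
      rw [SimpleGraph.dist_comm]
      have := SimpleGraph.dist_le (c.drop i)
      rw [length_wdrop] at this
      exact this
    refine le_antisymm (le_min upper1 upper2) ?_
    by_contra hlt
    push_neg at hlt
    rw [lt_min_iff] at hlt
    obtain ⟨hlt1, hlt2⟩ := hlt
    obtain ⟨P, hPpath, hPlen⟩ := SimpleGraph.Reachable.exists_path_of_dist ⟨A⟩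
    have hPA : P ≠ A := by
      intro hEq
      rw [hEq] at hPlen
      omega
    obtain ⟨a, C, hC, hCl⟩ := exists_cycle_of_two_paths P A hPpath pathA hPA
    have := girth_le a C hC
    omega
  rcases Nat.even_or_odd c.length with hpar | hpar
  · -- even: c.length = 2k + 2 with k ≥ 1
    obtain ⟨m, hm⟩ := hpar
    obtain ⟨k, hk⟩ : ∃ k, m = k + 2 := ⟨m - 2, by omega⟩
    have h1 : G.dist w (c.getVert (k + 1)) = k + 1 := by
      rw [key (k + 1) (by omega) (by omega)]
      omega
    have h2 : G.dist w (c.getVert (k + 2)) = k + 2 := by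
      rw [key (k + 2) (by omega) (by omega)]
      omega
    refine ⟨c.getVert (k + 1), c.getVert (k + 2), edge_getVert_mem c (by omega), ?_⟩
    rw [h1, h2]
    omega
  · -- odd: c.length = 2m + 1 with m ≥ 1
    obtain ⟨m, hm⟩ := hpar
    have h1 : G.dist w (c.getVert m) = m := by
      rw [key m (by omega) (by omega)]
      omega
    have h2 : G.dist w (c.getVert (m + 1)) = m := by
      rw [key (m + 1) (by omega) (by omega)]
      omega
    refine ⟨c.getVert m, c.getVert (m + 1), edge_getVert_mem c (by omega), ?_⟩
    rw [h1, h2]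
    omega
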